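/- For any integers r ≥ 0, s ≥ 0 with n = r + s > 0, the complexified Lie algebras 𝔊_{r,s} ⊗_ℝ ℂ and 𝔊_{n,0} ⊗_ℝ ℂ are isomorphic as complex Lie algebras. -/

import Mathlib

/-
Setting (Eberlein, "Isometries of Clifford Algebras II"):
`F` a field with `char F ≠ 2`, `n = r + s > 0`, and `Cl(r,s)` the Clifford algebra of `F^n`
in which `eᵢ·eⱼ = -eⱼ·eᵢ` for `i ≠ j`, `eᵢ² = -1` for the first `r` indices and
`eᵢ² = +1` for the last `s` indices.
-/

open CliffordAlgebra

namespace CliffPaper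

attribute [local instance 100] LieRing.ofAssociativeRing

/-- The quadratic form `q(x) = -x₁² - … - x_r² + x_{r+1}² + … + x_n²` on `F^(r+s)`. -/
noncomputable def Qf (F : Type*) [Field F] (r s : ℕ) : QuadraticForm F (Fin (r + s) → F) :=
  QuadraticMap.weightedSumSquares F (fun i : Fin (r + s) => if (i : ℕ) < r then (-1 : F) else 1)

/-- The Clifford algebra `Cl(r,s)`. -/
abbrev Cl (F : Type*) [Field F] (r s : ℕ) : Type _ := CliffordAlgebra (Qf F r s)

/-- The generator `e_i` of `Cl(r,s)` (`i` is a zero-based index, so `e_i² = -1` for `i < r`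
and `e_i² = +1` for `r ≤ i`). -/
noncomputable def gen (F : Type*) [Field F] (r s : ℕ) (i : Fin (r + s)) : Cl F r s :=
  ι (Qf F r s) (Pi.single i 1)

/-- For a multi-index `I = {i₁ < … < i_k}`, the product `e_I = e_{i₁} ⋯ e_{i_k}`. -/
noncomputable def eProd (F : Type*) [Field F] (r s : ℕ) (I : Finset (Fin (r + s))) : Cl F r s :=
  ((I.sort (· ≤ ·)).map (gen F r s)).prod

/-- Clifford conjugation: the unique anti-automorphism `c` of `Cl(r,s)` with `c ∘ c = id` and
`c(v) = -v` for all `v ∈ F^n`; concretely, reversal composed with the grade involution. -/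
noncomputable def conj (F : Type*) [Field F] (r s : ℕ) : Cl F r s →ₗ[F] Cl F r s :=
  (reverse (Q := Qf F r s)).comp (involute (Q := Qf F r s)).toLinearMap

theorem conj_mul (F : Type*) [Field F] (r s : ℕ) (a b : Cl F r s) :
    conj F r s (a * b) = conj F r s b * conj F r s a := by
  simp [conj, reverse.map_mul]

/-- `𝔊_{r,s} = {x ∈ Cl(r,s) : c(x) = -x}`, the `-1`-eigenspace of Clifford conjugation,
as an `F`-subspace of `Cl(r,s)`. -/
noncomputable def Gsub (F : Type*) [Field F] (r s : ℕ) : Submodule F (Cl F r s) :=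
  LinearMap.ker (conj F r s + LinearMap.id)

theorem mem_Gsub {F : Type*} [Field F] {r s : ℕ} (x : Cl F r s) :
    x ∈ Gsub F r s ↔ conj F r s x = -x := by
  simp [Gsub, LinearMap.mem_ker, add_eq_zero_iff_eq_neg]

/-- `𝔊_{r,s}` as a Lie subalgebra of `Cl(r,s)` with the commutator bracket
`⁅x,y⁆ = x*y - y*x`. -/
noncomputable def GLie (F : Type*) [Field F] (r s : ℕ) : LieSubalgebra F (Cl F r s) where
  toSubmodule := Gsub F r s
  lie_mem' := by
    intro x y hx hy
    have hx' : x ∈ Gsub F r s := hx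
    have hy' : y ∈ Gsub F r s := hy
    show ⁅x, y⁆ ∈ Gsub F r s
    rw [mem_Gsub] at hx' hy' ⊢
    rw [Ring.lie_def, map_sub, conj_mul, conj_mul, hx', hy']
    noncomm_ring

/-- `𝔎_{r,s}`: the `+1`-eigenspace of `β` restricted to `𝔊_{r,s}`. -/
noncomputable def Ksub (F : Type*) [Field F] (r s : ℕ) (β : Cl F r s ≃ₐ[F] Cl F r s) :
    Submodule F (Cl F r s) :=
  LinearMap.ker (β.toLinearMap - LinearMap.id) ⊓ Gsub F r s

/-- `𝔓_{r,s}`: the `-1`-eigenspace of `β` restricted to `𝔊_{r,s}`. -/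
noncomputable def Psub (F : Type*) [Field F] (r s : ℕ) (β : Cl F r s ≃ₐ[F] Cl F r s) :
    Submodule F (Cl F r s) :=
  LinearMap.ker (β.toLinearMap + LinearMap.id) ⊓ Gsub F r s

/-- The center `𝔷(𝔎_{r,s}) = {x ∈ 𝔎_{r,s} : [x,y] = 0 for all y ∈ 𝔎_{r,s}}`. -/
noncomputable def ZKsub (F : Type*) [Field F] (r s : ℕ) (β : Cl F r s ≃ₐ[F] Cl F r s) :
    Submodule F (Cl F r s) where
  carrier := {x | x ∈ Ksub F r s β ∧ ∀ y ∈ Ksub F r s β, x * y = y * x}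
  zero_mem' := ⟨zero_mem _, fun y _ => by simp⟩
  add_mem' := fun {a b} ha hb => ⟨add_mem ha.1 hb.1, fun y hy => by
    rw [add_mul, mul_add, ha.2 y hy, hb.2 y hy]⟩
  smul_mem' := fun c a ha => ⟨Submodule.smul_mem _ c ha.1, fun y hy => by
    rw [smul_mul_assoc, mul_smul_comm, ha.2 y hy]⟩

/-- `𝔥_{r,s}`: the span of the `e_I` with `|I| ≡ 1, 2 (mod 4)` and `I ≠ {1,…,n}`. -/
noncomputable def Hsub (F : Type*) [Field F] (r s : ℕ) : Submodule F (Cl F r s) :=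
  Submodule.span F {x | ∃ I : Finset (Fin (r + s)), I.Nonempty ∧ I ≠ Finset.univ ∧
    (I.card % 4 = 1 ∨ I.card % 4 = 2) ∧ x = eProd F r s I}

/-- The volume element `ω = e₁e₂⋯e_n`. -/
noncomputable def omegaEl (F : Type*) [Field F] (r s : ℕ) : Cl F r s :=
  eProd F r s Finset.univ


section Aux
open TensorProduct

section QfLemmas
variable (F : Type*) [Field F] (r s : ℕ)

theorem Qf_apply (x : Fin (r + s) → F) :
    Qf F r s x = ∑ i : Fin (r + s), (if (i : ℕ) < r then (-1 : F) else 1) * (x i * x i) := by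
  simp [Qf, QuadraticMap.weightedSumSquares_apply, smul_eq_mul]

theorem Qf_single (i : Fin (r + s)) :
    Qf F r s (Pi.single i 1) = if (i : ℕ) < r then (-1 : F) else 1 := by
  rw [Qf_apply, Finset.sum_eq_single i]
  · simp
  · intro j _ hj; simp [Pi.single_apply, hj]
  · simp

theorem Qf_polar_single {i j : Fin (r + s)} (h : i ≠ j) :
    QuadraticMap.polar (Qf F r s) (Pi.single i 1) (Pi.single j 1) = 0 := by
  unfold QuadraticMap.polar
  rw [Qf_apply, Qf_apply, Qf_apply, ← Finset.sum_sub_distrib, ← Finset.sum_sub_distrib]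
  apply Finset.sum_eq_zero
  intro k _
  rcases eq_or_ne k i with rfl | hki
  · simp [Pi.single_apply, h.symm]
  · rcases eq_or_ne k j with rfl | hkj
    · simp [Pi.single_apply, hki]
    · simp [Pi.single_apply, hki, hkj]

theorem Qf_eq_sum (x : Fin (r + s) → F) :
    Qf F r s x = ∑ i : Fin (r + s), Qf F r s (Pi.single i 1) * (x i * x i) := by
  rw [Qf_apply]
  exact Finset.sum_congr rfl fun i _ => by rw [Qf_single]

end QfLemmas



section
variable {m : ℕ} (Q : QuadraticForm ℝ (Fin m → ℝ))

noncomputable def conjQ : CliffordAlgebra Q →ₗ[ℝ] CliffordAlgebra Q :=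
  (reverse (Q := Q)).comp (involute (Q := Q)).toLinearMap

theorem conjQ_ι (x) : conjQ Q (ι Q x) = - ι Q x := by simp [conjQ]

theorem conjQ_conj (x) : conjQ Q (conjQ Q x) = x := by
  simp [conjQ, reverse_involute]

theorem conjQ_algebraMap (a : ℝ) : conjQ Q (algebraMap ℝ _ a) = algebraMap ℝ _ a := by
  simp [conjQ]

theorem conjQ_mul (a b) : conjQ Q (a * b) = conjQ Q b * conjQ Q a := by
  simp [conjQ, reverse.map_mul]

noncomputable def conjT : ℂ ⊗[ℝ] CliffordAlgebra Q →ₗ[ℂ] ℂ ⊗[ℝ] CliffordAlgebra Q :=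
  (conjQ Q).baseChange ℂ

theorem conjT_tmul (z : ℂ) (a : CliffordAlgebra Q) : conjT Q (z ⊗ₜ a) = z ⊗ₜ conjQ Q a := rfl

theorem conjT_mul (t u) : conjT Q (t * u) = conjT Q u * conjT Q t := by
  induction t using TensorProduct.induction_on with
  | zero => simp
  | add a b ha hb => simp [add_mul, mul_add, ha, hb]
  | tmul z a =>
    induction u using TensorProduct.induction_on with
    | zero => simp
    | add a' b' ha hb => simp [add_mul, mul_add, ha, hb]
    | tmul w b =>
      simp only [Algebra.TensorProduct.tmul_mul_tmul, conjT_tmul, conjQ_mul, mul_comm z w]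

theorem conjT_one : conjT Q 1 = 1 := by
  rw [Algebra.TensorProduct.one_def, conjT_tmul]
  congr 1
  simpa using conjQ_algebraMap Q 1

end

theorem one_tmul_algebraMap {A : Type*} [Ring A] [Algebra ℝ A] (r : ℝ) :
    ((1 : ℂ) ⊗ₜ[ℝ] (algebraMap ℝ A r)) = algebraMap ℝ (ℂ ⊗[ℝ] A) r := by
  rw [Algebra.algebraMap_eq_smul_one (R := ℝ) (A := A),
    Algebra.algebraMap_eq_smul_one (R := ℝ) (A := ℂ ⊗[ℝ] A), tmul_smul,
    Algebra.TensorProduct.one_def]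

section Build
variable {m : ℕ} (Q Q' : QuadraticForm ℝ (Fin m → ℝ)) (c : Fin m → ℂ)

noncomputable def bLin : (Fin m → ℝ) →ₗ[ℝ] ℂ ⊗[ℝ] CliffordAlgebra Q' :=
  ∑ i : Fin m, (LinearMap.toSpanSingleton ℝ _ (c i ⊗ₜ[ℝ] ι Q' (Pi.single i 1))).comp
    (LinearMap.proj i)

theorem bLin_apply (x : Fin m → ℝ) :
    bLin Q' c x = ∑ i : Fin m, x i • (c i ⊗ₜ[ℝ] ι Q' (Pi.single i 1)) := by
  simp [bLin, LinearMap.toSpanSingleton_apply]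

set_option maxHeartbeats 1000000 in
theorem bLin_sq
    (hsq : ∀ i, c i ^ 2 * (Q' (Pi.single i 1) : ℂ) = (Q (Pi.single i 1) : ℂ))
    (hpol : ∀ i j, i ≠ j → QuadraticMap.polar Q' (Pi.single i (1 : ℝ)) (Pi.single j 1) = 0)
    (hQ : ∀ x, Q x = ∑ i : Fin m, Q (Pi.single i 1) * (x i * x i))
    (x : Fin m → ℝ) :
    bLin Q' c x * bLin Q' c x = algebraMap ℝ _ (Q x) := by
  classical
  set v : Fin m → ℂ ⊗[ℝ] CliffordAlgebra Q' :=
    fun i => c i ⊗ₜ[ℝ] ι Q' (Pi.single i 1) with hv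
  set t : Fin m → Fin m → ℂ ⊗[ℝ] CliffordAlgebra Q' :=
    fun i j => (x i * x j) • (v i * v j) with ht
  have hvdiag : ∀ i, v i * v i = algebraMap ℝ _ (Q (Pi.single i 1)) := by
    intro i
    rw [hv]
    rw [Algebra.TensorProduct.tmul_mul_tmul, ι_sq_scalar,
      Algebra.algebraMap_eq_smul_one, tmul_smul, smul_tmul']
    have : (Q' (Pi.single i 1) : ℝ) • (c i * c i) = (Q (Pi.single i 1) : ℂ) := by
      rw [Complex.real_smul]
      rw [← hsq i]; ring
    rw [this]
    rw [Algebra.algebraMap_eq_smul_one (A := ℂ ⊗[ℝ] CliffordAlgebra Q')]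
    rw [show ((Q (Pi.single i 1) : ℂ)) ⊗ₜ[ℝ] (1 : CliffordAlgebra Q') =
      (Q (Pi.single i 1) : ℂ) • ((1:ℂ) ⊗ₜ[ℝ] (1 : CliffordAlgebra Q')) by
        rw [smul_tmul']; norm_num]
    rw [Algebra.TensorProduct.one_def]
    norm_num
    rfl
  have hvanti : ∀ i j, i ≠ j → v i * v j + v j * v i = 0 := by
    intro i j hij
    rw [hv]
    rw [Algebra.TensorProduct.tmul_mul_tmul, Algebra.TensorProduct.tmul_mul_tmul,
      mul_comm (c j) (c i), ← tmul_add, ι_mul_ι_add_swap, hpol i j hij]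
    simp
  have expand : bLin Q' c x * bLin Q' c x = ∑ i : Fin m, ∑ j : Fin m, t i j := by
    rw [bLin_apply, Finset.sum_mul_sum]
    simp only [smul_mul_smul_comm, ht]
    rfl
  have hTT : (∑ i : Fin m, ∑ j : Fin m, t i j) + (∑ i : Fin m, ∑ j : Fin m, t i j)
      = ∑ i : Fin m, (t i i + t i i) := by
    nth_rewrite 2 [Finset.sum_comm]
    rw [← Finset.sum_add_distrib]
    refine Finset.sum_congr rfl fun i _ => ?_
    rw [← Finset.sum_add_distrib]
    rw [Finset.sum_eq_single i]
    · intro j _ hji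
      rw [ht]
      show (x i * x j) • (v i * v j) + (x j * x i) • (v j * v i) = 0
      rw [mul_comm (x j) (x i), ← smul_add, hvanti i j (Ne.symm hji)]
      simp
    · simp
  have hTD : (∑ i : Fin m, ∑ j : Fin m, t i j) = ∑ i : Fin m, t i i := by
    have h2 : (2 : ℝ) • (∑ i : Fin m, ∑ j : Fin m, t i j)
        = (2 : ℝ) • ∑ i : Fin m, t i i := by
      rw [two_smul, two_smul, hTT, Finset.sum_add_distrib]
    calc (∑ i : Fin m, ∑ j : Fin m, t i j)
        = (2⁻¹ : ℝ) • ((2 : ℝ) • (∑ i : Fin m, ∑ j : Fin m, t i j)) := by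
          rw [smul_smul, show (2⁻¹ : ℝ) * 2 = 1 by norm_num, one_smul]
      _ = ∑ i : Fin m, t i i := by
          rw [h2, smul_smul, show (2⁻¹ : ℝ) * 2 = 1 by norm_num, one_smul]
  rw [expand, hTD]
  have : ∀ i : Fin m, t i i = algebraMap ℝ _ ((x i * x i) * Q (Pi.single i 1)) := by
    intro i
    rw [ht]
    show (x i * x i) • (v i * v i) = _
    rw [hvdiag i]
    simp [Algebra.algebraMap_eq_smul_one, smul_smul]
  rw [Finset.sum_congr rfl fun i _ => this i, ← map_sum]
  congr 1
  rw [hQ x]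
  exact Finset.sum_congr rfl fun i _ => by ring


variable (hsq : ∀ i, c i ^ 2 * (Q' (Pi.single i 1) : ℂ) = (Q (Pi.single i 1) : ℂ))
    (hpol : ∀ i j, i ≠ j → QuadraticMap.polar Q' (Pi.single i (1 : ℝ)) (Pi.single j 1) = 0)
    (hQ : ∀ x, Q x = ∑ i : Fin m, Q (Pi.single i 1) * (x i * x i))

noncomputable def bHom : CliffordAlgebra Q →ₐ[ℝ] ℂ ⊗[ℝ] CliffordAlgebra Q' :=
  CliffordAlgebra.lift Q ⟨bLin Q' c, bLin_sq Q Q' c hsq hpol hQ⟩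

noncomputable def bHomC : ℂ ⊗[ℝ] CliffordAlgebra Q →ₐ[ℂ] ℂ ⊗[ℝ] CliffordAlgebra Q' :=
  Algebra.TensorProduct.lift (Algebra.ofId ℂ _) (bHom Q Q' c hsq hpol hQ)
    (fun z a => show Commute (Algebra.ofId ℂ _ z) _ from Algebra.commute_algebraMap_left z _)

theorem bHomC_tmul (z : ℂ) (a : CliffordAlgebra Q) :
    bHomC Q Q' c hsq hpol hQ (z ⊗ₜ a) = z • bHom Q Q' c hsq hpol hQ a := by
  rw [bHomC, Algebra.TensorProduct.lift_tmul]
  rw [show (Algebra.ofId ℂ (ℂ ⊗[ℝ] CliffordAlgebra Q')) z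
      = algebraMap ℂ _ z from rfl, ← Algebra.smul_def]

theorem bHomC_tmul_ι (z : ℂ) (x : Fin m → ℝ) :
    bHomC Q Q' c hsq hpol hQ (z ⊗ₜ ι Q x)
      = z • ∑ i : Fin m, x i • (c i ⊗ₜ[ℝ] ι Q' (Pi.single i 1)) := by
  rw [bHomC_tmul, bHom, CliffordAlgebra.lift_ι_apply, bLin_apply]

/-- Extensionality for `ℂ`-algebra homs out of `ℂ ⊗[ℝ] CliffordAlgebra Q`. -/
theorem algHomC_ext {C : Type*} [Ring C] [Algebra ℂ C]
    {g₁ g₂ : ℂ ⊗[ℝ] CliffordAlgebra Q →ₐ[ℂ] C}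
    (h : ∀ x, g₁ ((1 : ℂ) ⊗ₜ ι Q x) = g₂ ((1 : ℂ) ⊗ₜ ι Q x)) : g₁ = g₂ := by
  apply AlgHom.ext
  intro t
  induction t using TensorProduct.induction_on with
  | zero => simp
  | add a b ha hb => simp [ha, hb]
  | tmul z a =>
    have h1 : ∀ b : CliffordAlgebra Q, g₁ ((1 : ℂ) ⊗ₜ b) = g₂ ((1 : ℂ) ⊗ₜ b) := by
      intro b
      induction b using CliffordAlgebra.induction with
      | algebraMap r =>
        rw [one_tmul_algebraMap]
        rw [show (algebraMap ℝ (ℂ ⊗[ℝ] CliffordAlgebra Q) r)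
            = algebraMap ℂ _ (algebraMap ℝ ℂ r) from (IsScalarTower.algebraMap_apply ℝ ℂ _ r)]
        rw [AlgHom.commutes, AlgHom.commutes]
      | ι x => exact h x
      | mul a b ha hb =>
        rw [show ((1:ℂ) ⊗ₜ[ℝ] (a * b)) = ((1:ℂ) ⊗ₜ[ℝ] a) * ((1:ℂ) ⊗ₜ[ℝ] b) by
          rw [Algebra.TensorProduct.tmul_mul_tmul, one_mul]]
        rw [map_mul, map_mul, ha, hb]
      | add a b ha hb => rw [tmul_add, map_add, map_add, ha, hb]
    rw [show (z ⊗ₜ[ℝ] a) = z • ((1:ℂ) ⊗ₜ[ℝ] a) by rw [smul_tmul', smul_eq_mul, mul_one]]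
    rw [map_smul, map_smul, h1]

set_option maxHeartbeats 1000000 in
theorem bHomC_conjT (t : ℂ ⊗[ℝ] CliffordAlgebra Q) :
    bHomC Q Q' c hsq hpol hQ (conjT Q t) = conjT Q' (bHomC Q Q' c hsq hpol hQ t) := by
  induction t using TensorProduct.induction_on with
  | zero => simp
  | add a b ha hb => simp [ha, hb]
  | tmul z a =>
    have h1 : ∀ b : CliffordAlgebra Q,
        bHomC Q Q' c hsq hpol hQ (conjT Q ((1:ℂ) ⊗ₜ b))
          = conjT Q' (bHomC Q Q' c hsq hpol hQ ((1:ℂ) ⊗ₜ b)) := by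
      intro b
      induction b using CliffordAlgebra.induction with
      | algebraMap r =>
        rw [conjT_tmul, conjQ_algebraMap]
        rw [one_tmul_algebraMap]
        rw [show (algebraMap ℝ (ℂ ⊗[ℝ] CliffordAlgebra Q) r)
            = algebraMap ℂ _ (algebraMap ℝ ℂ r) from (IsScalarTower.algebraMap_apply ℝ ℂ _ r)]
        rw [AlgHom.commutes]
        rw [show (algebraMap ℂ (ℂ ⊗[ℝ] CliffordAlgebra Q') (algebraMap ℝ ℂ r))
            = algebraMap ℝ _ r from (IsScalarTower.algebraMap_apply ℝ ℂ _ r).symm]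
        rw [← one_tmul_algebraMap]
        rw [conjT_tmul, conjQ_algebraMap]
      | ι x =>
        rw [conjT_tmul, conjQ_ι, tmul_neg, map_neg, bHomC_tmul_ι, one_smul,
          map_sum, ← Finset.sum_neg_distrib]
        refine Finset.sum_congr rfl fun i _ => ?_
        rw [LinearMap.map_smul_of_tower, conjT_tmul, conjQ_ι, tmul_neg, smul_neg]
      | mul a b ha hb =>
        rw [show ((1:ℂ) ⊗ₜ[ℝ] (a * b)) = ((1:ℂ) ⊗ₜ[ℝ] a) * ((1:ℂ) ⊗ₜ[ℝ] b) by
          rw [Algebra.TensorProduct.tmul_mul_tmul, one_mul]]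
        rw [conjT_mul, map_mul, map_mul, ha, hb, ← conjT_mul]
      | add a b ha hb => rw [tmul_add, map_add, map_add, map_add, ha, hb, map_add]
    rw [show (z ⊗ₜ[ℝ] a) = z • ((1:ℂ) ⊗ₜ[ℝ] a) by rw [smul_tmul', smul_eq_mul, mul_one]]
    simp only [map_smul, h1]


theorem tmul_ι_sum_eq {Q : QuadraticForm ℝ (Fin m → ℝ)} (x : Fin m → ℝ) :
    ∑ i : Fin m, x i • ((1 : ℂ) ⊗ₜ[ℝ] ι Q (Pi.single i 1)) = (1 : ℂ) ⊗ₜ[ℝ] ι Q x := by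
  have h1 : ∀ i : Fin m, x i • ((1 : ℂ) ⊗ₜ[ℝ] ι Q (Pi.single i 1))
      = (1 : ℂ) ⊗ₜ[ℝ] ι Q (Pi.single i (x i)) := fun i => by
    rw [← tmul_smul, ← map_smul, ← Pi.single_smul, smul_eq_mul, mul_one]
  rw [Finset.sum_congr rfl fun i _ => h1 i, ← tmul_sum]
  congr 1
  rw [← map_sum]
  congr 1
  exact Finset.univ_sum_single x

set_option maxHeartbeats 1000000 in
set_option synthInstance.maxHeartbeats 1000000 in
theorem bHomC_comp (d : Fin m → ℂ)
    (hsq' : ∀ i, d i ^ 2 * (Q (Pi.single i 1) : ℂ) = (Q' (Pi.single i 1) : ℂ))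
    (hpol' : ∀ i j, i ≠ j → QuadraticMap.polar Q (Pi.single i (1 : ℝ)) (Pi.single j 1) = 0)
    (hQ' : ∀ x, Q' x = ∑ i : Fin m, Q' (Pi.single i 1) * (x i * x i))
    (hcd : ∀ i, c i * d i = 1) :
    (bHomC Q' Q d hsq' hpol' hQ').comp (bHomC Q Q' c hsq hpol hQ) = AlgHom.id ℂ _ := by
  apply algHomC_ext
  intro x
  rw [AlgHom.comp_apply, AlgHom.id_apply, bHomC_tmul_ι, one_smul, map_sum]
  have step : ∀ i : Fin m,
      (bHomC Q' Q d hsq' hpol' hQ') (x i • (c i ⊗ₜ[ℝ] ι Q' (Pi.single i 1)))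
        = x i • ((1 : ℂ) ⊗ₜ[ℝ] ι Q (Pi.single i 1)) := by
    intro i
    have harg : x i • (c i ⊗ₜ[ℝ] ι Q' (Pi.single i 1))
        = (((x i : ℂ)) * c i) • ((1 : ℂ) ⊗ₜ[ℝ] ι Q' (Pi.single i 1)) := by
      rw [smul_tmul', smul_tmul', smul_eq_mul, mul_one, Complex.real_smul]
    rw [harg, map_smul, bHomC_tmul_ι, one_smul]
    have hcollapse : ∑ j : Fin m, (Pi.single i (1:ℝ) : Fin m → ℝ) j • (d j ⊗ₜ[ℝ] ι Q (Pi.single j 1))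
        = d i ⊗ₜ[ℝ] ι Q (Pi.single i 1) := by
      rw [Finset.sum_eq_single i]
      · simp
      · intro j _ hj; simp [Pi.single_apply, hj]
      · simp
    rw [hcollapse, smul_tmul', smul_eq_mul, mul_assoc, hcd, mul_one, smul_tmul',
      Complex.real_smul, mul_one]
  rw [Finset.sum_congr rfl fun i _ => step i]
  exact tmul_ι_sum_eq x

end Build


end Aux

section Main
open TensorProduct

variable (r s : ℕ)

theorem mem_GLie {x : Cl ℝ r s} : x ∈ GLie ℝ r s ↔ conj ℝ r s x = -x := by
  rw [show (x ∈ GLie ℝ r s) ↔ x ∈ Gsub ℝ r s from Iff.rfl]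
  exact mem_Gsub x

theorem conj_conj' (x : Cl ℝ r s) : conj ℝ r s (conj ℝ r s x) = x :=
  conjQ_conj (Qf ℝ r s) x

noncomputable def cC : Fin (r + s) → ℂ := fun i => if (i : ℕ) < r then 1 else Complex.I
noncomputable def dC : Fin (r + s) → ℂ := fun i => if (i : ℕ) < r then 1 else -Complex.I

theorem hsq_c : ∀ i : Fin (r + s), cC r s i ^ 2 * ((Qf ℝ (r + s) 0) (Pi.single i 1) : ℂ)
    = ((Qf ℝ r s) (Pi.single i 1) : ℂ) := by
  intro i
  have h0 : (Qf ℝ (r + s) 0) (Pi.single i 1) = -1 := by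
    rw [Qf_single ℝ (r + s) 0 i]; exact if_pos i.isLt
  rw [h0, Qf_single ℝ r s i]
  by_cases h : (i : ℕ) < r
  · simp [cC, h]
  · simp [cC, h, Complex.I_sq]

theorem hsq_d : ∀ i : Fin (r + s), dC r s i ^ 2 * ((Qf ℝ r s) (Pi.single i 1) : ℂ)
    = ((Qf ℝ (r + s) 0) (Pi.single i 1) : ℂ) := by
  intro i
  have h0 : (Qf ℝ (r + s) 0) (Pi.single i 1) = -1 := by
    rw [Qf_single ℝ (r + s) 0 i]; exact if_pos i.isLt
  rw [h0, Qf_single ℝ r s i]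
  by_cases h : (i : ℕ) < r
  · simp [dC, h]
  · simp [dC, h, Complex.I_sq]

noncomputable def Phi1 : ℂ ⊗[ℝ] Cl ℝ r s →ₐ[ℂ] ℂ ⊗[ℝ] Cl ℝ (r + s) 0 :=
  bHomC (Qf ℝ r s) (Qf ℝ (r + s) 0) (cC r s) (hsq_c r s)
    (fun _ _ h => Qf_polar_single ℝ (r + s) 0 h) (Qf_eq_sum ℝ r s)

noncomputable def Phi2 : ℂ ⊗[ℝ] Cl ℝ (r + s) 0 →ₐ[ℂ] ℂ ⊗[ℝ] Cl ℝ r s :=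
  bHomC (Qf ℝ (r + s) 0) (Qf ℝ r s) (dC r s) (hsq_d r s)
    (fun _ _ h => Qf_polar_single ℝ r s h) (Qf_eq_sum ℝ (r + s) 0)

theorem hcd : ∀ i : Fin (r + s), cC r s i * dC r s i = 1 := by
  intro i
  by_cases h : (i : ℕ) < r
  · simp [cC, dC, h]
  · simp [cC, dC, h, Complex.I_mul_I]

theorem hdc : ∀ i : Fin (r + s), dC r s i * cC r s i = 1 := by
  intro i
  rw [mul_comm]; exact hcd r s i

theorem Phi21 : (Phi2 r s).comp (Phi1 r s) = AlgHom.id ℂ _ :=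
  bHomC_comp _ _ _ _ _ _ _ _ _ _ (hcd r s)

theorem Phi12 : (Phi1 r s).comp (Phi2 r s) = AlgHom.id ℂ _ :=
  bHomC_comp _ _ _ _ _ _ _ _ _ _ (hdc r s)

noncomputable def conjC : (ℂ ⊗[ℝ] Cl ℝ r s) →ₗ[ℂ] ℂ ⊗[ℝ] Cl ℝ r s :=
  (conj ℝ r s).baseChange ℂ

theorem Phi1_conj (t : ℂ ⊗[ℝ] Cl ℝ r s) :
    Phi1 r s (conjC r s t) = conjC (r + s) 0 (Phi1 r s t) :=
  bHomC_conjT (Qf ℝ r s) (Qf ℝ (r + s) 0) (cC r s) (hsq_c r s)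
    (fun _ _ h => Qf_polar_single ℝ (r + s) 0 h) (Qf_eq_sum ℝ r s) t

theorem Phi2_conj (t : ℂ ⊗[ℝ] Cl ℝ (r + s) 0) :
    Phi2 r s (conjC (r + s) 0 t) = conjC r s (Phi2 r s t) :=
  bHomC_conjT (Qf ℝ (r + s) 0) (Qf ℝ r s) (dC r s) (hsq_d r s)
    (fun _ _ h => Qf_polar_single ℝ r s h) (Qf_eq_sum ℝ (r + s) 0) t

noncomputable def incl : (↥(GLie ℝ r s)) →ₗ[ℝ] Cl ℝ r s where
  toFun x := (x : Cl ℝ r s)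
  map_add' _ _ := rfl
  map_smul' _ _ := rfl

theorem incl_conj : (conj ℝ r s).comp (incl r s) = - incl r s := by
  apply LinearMap.ext
  rintro ⟨x, hx⟩
  show conj ℝ r s x = - x
  exact (mem_GLie r s).mp hx

noncomputable def gProj : Cl ℝ r s →ₗ[ℝ] ↥(GLie ℝ r s) where
  toFun x := ⟨(2⁻¹ : ℝ) • (x - conj ℝ r s x), by
    rw [mem_GLie, map_smul, map_sub, conj_conj', ← smul_neg, neg_sub]⟩
  map_add' a b := by
    apply Subtype.ext
    show (2⁻¹ : ℝ) • ((a + b) - conj ℝ r s (a + b))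
      = (2⁻¹ : ℝ) • (a - conj ℝ r s a) + (2⁻¹ : ℝ) • (b - conj ℝ r s b)
    rw [map_add, ← smul_add]
    congr 1
    abel
  map_smul' c a := by
    apply Subtype.ext
    show (2⁻¹ : ℝ) • (c • a - conj ℝ r s (c • a)) = c • ((2⁻¹ : ℝ) • (a - conj ℝ r s a))
    rw [map_smul, ← smul_sub, smul_comm]

theorem gProj_incl : (gProj r s).comp (incl r s) = LinearMap.id := by
  apply LinearMap.ext
  rintro ⟨x, hx⟩
  apply Subtype.ext
  show (2⁻¹ : ℝ) • (x - conj ℝ r s x) = x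
  rw [(mem_GLie r s).mp hx, sub_neg_eq_add, ← two_smul ℝ x, smul_smul]
  norm_num

theorem incl_gProj : (incl r s).comp (gProj r s)
    = (2⁻¹ : ℝ) • (LinearMap.id - conj ℝ r s) := by
  apply LinearMap.ext
  intro x
  rfl

noncomputable def jmap : ℂ ⊗[ℝ] (↥(GLie ℝ r s)) →ₗ[ℂ] ℂ ⊗[ℝ] Cl ℝ r s :=
  (incl r s).baseChange ℂ

noncomputable def pC : ℂ ⊗[ℝ] Cl ℝ r s →ₗ[ℂ] ℂ ⊗[ℝ] (↥(GLie ℝ r s)) :=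
  (gProj r s).baseChange ℂ

theorem pC_jmap (t : ℂ ⊗[ℝ] (↥(GLie ℝ r s))) : pC r s (jmap r s t) = t := by
  have h : (pC r s).comp (jmap r s) = LinearMap.id := by
    rw [pC, jmap, ← LinearMap.baseChange_comp, gProj_incl, LinearMap.baseChange_id]
  exact LinearMap.ext_iff.mp h t

theorem jmap_inj : Function.Injective (jmap r s) := by
  intro u v h
  have := congrArg (pC r s) h
  rwa [pC_jmap, pC_jmap] at this

theorem conjC_jmap (t : ℂ ⊗[ℝ] (↥(GLie ℝ r s))) :
    conjC r s (jmap r s t) = - jmap r s t := by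
  have h : (conjC r s).comp (jmap r s) = - jmap r s := by
    rw [conjC, jmap, ← LinearMap.baseChange_comp, incl_conj, LinearMap.baseChange_neg]
  have := LinearMap.ext_iff.mp h t
  rw [LinearMap.comp_apply] at this
  rw [this, LinearMap.neg_apply]

theorem jmap_pC {t : ℂ ⊗[ℝ] Cl ℝ r s} (ht : conjC r s t = -t) :
    jmap r s (pC r s t) = t := by
  have h : (jmap r s).comp (pC r s) = (2⁻¹ : ℝ) • (LinearMap.id - conjC r s) := by
    rw [jmap, pC, ← LinearMap.baseChange_comp, incl_gProj, LinearMap.baseChange_smul,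
      LinearMap.baseChange_sub, LinearMap.baseChange_id]
    rfl
  have h2 := LinearMap.ext_iff.mp h t
  rw [LinearMap.comp_apply] at h2
  rw [h2, LinearMap.smul_apply, LinearMap.sub_apply, LinearMap.id_apply, ht,
    sub_neg_eq_add, ← two_smul ℝ t, smul_smul]
  norm_num

set_option maxHeartbeats 2000000 in
set_option synthInstance.maxHeartbeats 1000000 in
theorem jmap_lie (x y : ℂ ⊗[ℝ] (↥(GLie ℝ r s))) :
    jmap r s ⁅x, y⁆ = jmap r s x * jmap r s y - jmap r s y * jmap r s x := by
  induction x using TensorProduct.induction_on with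
  | zero =>
    have h0 : ⁅(0 : ℂ ⊗[ℝ] (↥(GLie ℝ r s))), y⁆ = 0 := zero_lie y
    rw [h0]; simp
  | add a b ha hb =>
    have h0 : ⁅a + b, y⁆ = ⁅a, y⁆ + ⁅b, y⁆ := add_lie a b y
    rw [h0, map_add, ha, hb, map_add]
    noncomm_ring
  | tmul z a =>
    induction y using TensorProduct.induction_on with
    | zero =>
      have h0 : ⁅z ⊗ₜ[ℝ] a, (0 : ℂ ⊗[ℝ] (↥(GLie ℝ r s)))⁆ = 0 :=
        lie_zero (L := ℂ ⊗[ℝ] (↥(GLie ℝ r s))) (M := ℂ ⊗[ℝ] (↥(GLie ℝ r s))) _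
      rw [h0]; simp
    | add u v hu hv =>
      have h0 : ⁅z ⊗ₜ[ℝ] a, u + v⁆ = ⁅z ⊗ₜ[ℝ] a, u⁆ + ⁅z ⊗ₜ[ℝ] a, v⁆ :=
        lie_add (L := ℂ ⊗[ℝ] (↥(GLie ℝ r s))) (M := ℂ ⊗[ℝ] (↥(GLie ℝ r s))) _ u v
      rw [h0, map_add, hu, hv, map_add]
      noncomm_ring
    | tmul w b =>
      rw [LieAlgebra.ExtendScalars.bracket_tmul]
      rw [jmap, LinearMap.baseChange_tmul, LinearMap.baseChange_tmul,
        LinearMap.baseChange_tmul]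
      have hb : incl r s ⁅a, b⁆ = incl r s a * incl r s b - incl r s b * incl r s a := by
        show ((⁅a, b⁆ : ↥(GLie ℝ r s)) : Cl ℝ r s) = _
        rw [LieSubalgebra.coe_bracket, Ring.lie_def]
        rfl
      rw [hb, tmul_sub, Algebra.TensorProduct.tmul_mul_tmul,
        Algebra.TensorProduct.tmul_mul_tmul, mul_comm w z]

noncomputable def fwd : ℂ ⊗[ℝ] (↥(GLie ℝ r s)) →ₗ[ℂ] ℂ ⊗[ℝ] (↥(GLie ℝ (r + s) 0)) :=
  (pC (r + s) 0) ∘ₗ (Phi1 r s).toLinearMap ∘ₗ jmap r s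

noncomputable def bwd : ℂ ⊗[ℝ] (↥(GLie ℝ (r + s) 0)) →ₗ[ℂ] ℂ ⊗[ℝ] (↥(GLie ℝ r s)) :=
  (pC r s) ∘ₗ (Phi2 r s).toLinearMap ∘ₗ jmap (r + s) 0

theorem jmap_fwd (t : ℂ ⊗[ℝ] (↥(GLie ℝ r s))) :
    jmap (r + s) 0 (fwd r s t) = Phi1 r s (jmap r s t) := by
  show jmap (r + s) 0 (pC (r + s) 0 ((Phi1 r s) (jmap r s t))) = _
  apply jmap_pC
  rw [← Phi1_conj, conjC_jmap, map_neg]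

theorem jmap_bwd (t : ℂ ⊗[ℝ] (↥(GLie ℝ (r + s) 0))) :
    jmap r s (bwd r s t) = Phi2 r s (jmap (r + s) 0 t) := by
  show jmap r s (pC r s ((Phi2 r s) (jmap (r + s) 0 t))) = _
  apply jmap_pC
  rw [← Phi2_conj, conjC_jmap, map_neg]

theorem bwd_fwd (t : ℂ ⊗[ℝ] (↥(GLie ℝ r s))) : bwd r s (fwd r s t) = t := by
  show pC r s ((Phi2 r s) (jmap (r + s) 0 (fwd r s t))) = t
  rw [jmap_fwd]
  have := AlgHom.congr_fun (Phi21 r s) (jmap r s t)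
  rw [AlgHom.comp_apply, AlgHom.id_apply] at this
  rw [this, pC_jmap]

theorem fwd_bwd (t : ℂ ⊗[ℝ] (↥(GLie ℝ (r + s) 0))) : fwd r s (bwd r s t) = t := by
  show pC (r + s) 0 ((Phi1 r s) (jmap r s (bwd r s t))) = t
  rw [jmap_bwd]
  have := AlgHom.congr_fun (Phi12 r s) (jmap (r + s) 0 t)
  rw [AlgHom.comp_apply, AlgHom.id_apply] at this
  rw [this, pC_jmap]

theorem fwd_lie (x y : ℂ ⊗[ℝ] (↥(GLie ℝ r s))) :
    fwd r s ⁅x, y⁆ = ⁅fwd r s x, fwd r s y⁆ := by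
  apply jmap_inj (r + s) 0
  rw [jmap_fwd, jmap_lie, jmap_lie, jmap_fwd, jmap_fwd, map_sub, map_mul, map_mul]

end Main

open TensorProduct in
/-- 𝔊_{r,s} ⊗_ℝ ℂ ≅ 𝔊_{n,0} ⊗_ℝ ℂ as complex Lie algebras, n = r+s. -/
theorem statement13 (r s : ℕ) (hn : 0 < r + s) :
    Nonempty ((ℂ ⊗[ℝ] ↥(GLie ℝ r s)) ≃ₗ⁅ℂ⁆ (ℂ ⊗[ℝ] ↥(GLie ℝ (r + s) 0))) := by
  exact ⟨{ toLinearMap := fwd r s, map_lie' := fwd_lie r s _ _, invFun := bwd r s,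
           left_inv := bwd_fwd r s, right_inv := fwd_bwd r s }⟩

end CliffPaper
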